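/- For any permutation π of {1,...,n} and any index f, the maximum length of a (213,231)-avoiding subsequence of π ending at index f equals LIS(f) + LDS(f) − 1, where LIS(f) (resp. LDS(f)) is the maximum length of an increasing (resp. decreasing) subsequence of π ending at index f. -/

import Mathlib

def AvSeq213231 {α : Type*} [LinearOrder α] {m : ℕ} (s : Fin m → α) : Prop :=
  (¬ ∃ i j k : Fin m, i < j ∧ j < k ∧ s j < s i ∧ s i < s k) ∧
  (¬ ∃ i j k : Fin m, i < j ∧ j < k ∧ s k < s i ∧ s i < s j)

lemma enum_lemma' {n : ℕ} (s : Finset (Fin n)) (f : Fin n) (hf : f ∈ s)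
    (hmax : ∀ x ∈ s, x ≤ f) :
    ∃ g : Fin (s.card - 1 + 1) → Fin n, StrictMono g ∧ g (Fin.last (s.card - 1)) = f ∧
      (∀ a, g a ∈ s) := by
  have hpos : 0 < s.card := Finset.card_pos.mpr ⟨f, hf⟩
  have hcard : s.card = s.card - 1 + 1 := (Nat.succ_pred_eq_of_pos hpos).symm
  let e := s.orderIsoOfFin hcard
  refine ⟨fun a => (e a : Fin n), ?_, ?_, fun a => (e a).2⟩
  · intro a b hab
    exact Subtype.coe_lt_coe.mpr (e.strictMono hab)
  · have h1 : (e (Fin.last _) : Fin n) ≤ f := hmax _ (e _).2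
    have h2 : f ≤ (e (Fin.last _) : Fin n) := by
      obtain ⟨a, ha⟩ := e.surjective ⟨f, hf⟩
      have : (e a : Fin n) ≤ (e (Fin.last _) : Fin n) :=
        Subtype.coe_le_coe.mpr (e.monotone (Fin.le_last a))
      rw [ha] at this; exact this
    exact le_antisymm h1 h2

/-- The maximum length of a (213,231)-avoiding subsequence of `π` ending at
index `f` equals `LIS(f) + LDS(f) - 1`, where `LIS(f)` (resp. `LDS(f)`) is the
maximum length of an increasing (resp. decreasing) subsequence ending at `f`. -/
theorem longest_avoiding_eq_LIS_add_LDS_sub_one (n : ℕ)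
    (π : Equiv.Perm (Fin n)) (f : Fin n) :
    sSup {L : ℕ | ∃ (m : ℕ) (g : Fin (m + 1) → Fin n), StrictMono g ∧
        g (Fin.last m) = f ∧ AvSeq213231 (fun a => π (g a)) ∧ L = m + 1}
      = sSup {L : ℕ | ∃ (m : ℕ) (g : Fin (m + 1) → Fin n), StrictMono g ∧
          g (Fin.last m) = f ∧ StrictMono (fun a => π (g a)) ∧ L = m + 1}
        + sSup {L : ℕ | ∃ (m : ℕ) (g : Fin (m + 1) → Fin n), StrictMono g ∧
            g (Fin.last m) = f ∧ StrictAnti (fun a => π (g a)) ∧ L = m + 1}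
        - 1 := by
  classical
  set A := {L : ℕ | ∃ (m : ℕ) (g : Fin (m + 1) → Fin n), StrictMono g ∧
      g (Fin.last m) = f ∧ AvSeq213231 (fun a => π (g a)) ∧ L = m + 1} with hAdef
  set I := {L : ℕ | ∃ (m : ℕ) (g : Fin (m + 1) → Fin n), StrictMono g ∧
      g (Fin.last m) = f ∧ StrictMono (fun a => π (g a)) ∧ L = m + 1} with hIdef
  set D := {L : ℕ | ∃ (m : ℕ) (g : Fin (m + 1) → Fin n), StrictMono g ∧
      g (Fin.last m) = f ∧ StrictAnti (fun a => π (g a)) ∧ L = m + 1} with hDdef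
  have hsm1 : StrictMono (fun _ : Fin (0+1) => f) :=
    fun a b h => absurd h (by omega)
  have hsm1' : StrictMono (fun a : Fin (0+1) => π ((fun _ => f) a)) :=
    fun a b h => absurd h (by omega)
  have hsa1' : StrictAnti (fun a : Fin (0+1) => π ((fun _ => f) a)) :=
    fun a b h => absurd h (by omega)
  have hav1 : AvSeq213231 (fun a : Fin (0+1) => π ((fun _ => f) a)) := by
    constructor
    · rintro ⟨i, j, k, hij, -, -⟩; exact absurd hij (by omega)
    · rintro ⟨i, j, k, hij, -, -⟩; exact absurd hij (by omega)
  have h1A : (1:ℕ) ∈ A := ⟨0, fun _ => f, hsm1, rfl, hav1, rfl⟩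
  have h1I : (1:ℕ) ∈ I := ⟨0, fun _ => f, hsm1, rfl, hsm1', rfl⟩
  have h1D : (1:ℕ) ∈ D := ⟨0, fun _ => f, hsm1, rfl, hsa1', rfl⟩
  have hbd : ∀ (m : ℕ) (g : Fin (m+1) → Fin n), StrictMono g → m + 1 ≤ n := by
    intro m g hg
    have := Fintype.card_le_of_injective g hg.injective
    simpa using this
  have bddA : BddAbove A := ⟨n, by rintro L ⟨m, g, hg, -, -, rfl⟩; exact hbd m g hg⟩
  have bddI : BddAbove I := ⟨n, by rintro L ⟨m, g, hg, -, -, rfl⟩; exact hbd m g hg⟩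
  have bddD : BddAbove D := ⟨n, by rintro L ⟨m, g, hg, -, -, rfl⟩; exact hbd m g hg⟩
  have hπinj : Function.Injective π := π.injective
  -- Upper bound: sSup A ≤ sSup I + sSup D - 1
  have hle : sSup A ≤ sSup I + sSup D - 1 := by
    refine csSup_le ⟨1, h1A⟩ ?_
    rintro L ⟨m, g, hg, hend, ⟨hav213, hav231⟩, rfl⟩
    set T := Finset.image g Finset.univ with hTdef
    have hmemT : ∀ x, x ∈ T ↔ ∃ p, g p = x := by
      intro x; simp [hTdef]
    have hfT : f ∈ T := (hmemT f).mpr ⟨Fin.last m, hend⟩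
    have hmaxT : ∀ x ∈ T, x ≤ f := by
      intro x hx
      obtain ⟨p, rfl⟩ := (hmemT x).mp hx
      rw [← hend]; exact hg.monotone (Fin.le_last p)
    have hTcard : T.card = m + 1 := by
      rw [hTdef, Finset.card_image_of_injective _ hg.injective]
      simp
    set SL := T.filter (fun x => π x ≤ π f) with hSLdef
    set SH := T.filter (fun x => π f ≤ π x) with hSHdef
    have hfSL : f ∈ SL := by simp [hSLdef, hfT]
    have hfSH : f ∈ SH := by simp [hSHdef, hfT]
    have hunion : SL ∪ SH = T := by
      ext x
      simp only [hSLdef, hSHdef, Finset.mem_union, Finset.mem_filter]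
      constructor
      · rintro (⟨h, -⟩ | ⟨h, -⟩) <;> exact h
      · intro h; rcases le_total (π x) (π f) with h' | h'
        · exact Or.inl ⟨h, h'⟩
        · exact Or.inr ⟨h, h'⟩
    have hinter : SL ∩ SH = {f} := by
      ext x
      simp only [hSLdef, hSHdef, Finset.mem_inter, Finset.mem_filter, Finset.mem_singleton]
      constructor
      · rintro ⟨⟨-, h1⟩, ⟨-, h2⟩⟩
        exact hπinj (le_antisymm h1 h2)
      · rintro rfl; exact ⟨⟨hfT, le_rfl⟩, ⟨hfT, le_rfl⟩⟩
    have hcards : SL.card + SH.card = m + 2 := by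
      have := Finset.card_union_add_card_inter SL SH
      rw [hunion, hinter, hTcard] at this
      simp at this
      omega
    -- SL gives an increasing subsequence
    have hSLle : SL.card ≤ sSup I := by
      obtain ⟨gl, hglm, hgll, hglmem⟩ := enum_lemma' SL f hfSL
        (fun x hx => hmaxT x (by rw [← hunion]; exact Finset.mem_union_left _ hx))
      have hπm : StrictMono (fun a => π (gl a)) := by
        intro a b hab
        show π (gl a) < π (gl b)
        have hlt : gl a < gl b := hglm hab
        have hbf : gl b ≤ f := by rw [← hgll]; exact hglm.monotone (Fin.le_last b)
        have haf : gl a ≠ f := (lt_of_lt_of_le hlt hbf).ne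
        have haSL := hglmem a
        have hbSL := hglmem b
        rw [hSLdef, Finset.mem_filter] at haSL hbSL
        have haπ : π (gl a) < π f :=
          lt_of_le_of_ne haSL.2 (fun h => haf (hπinj h))
        rcases eq_or_ne (gl b) f with hbf' | hbf'
        · rw [hbf']; exact haπ
        · have hbπ : π (gl b) < π f :=
            lt_of_le_of_ne hbSL.2 (fun h => hbf' (hπinj h))
          obtain ⟨p, hp⟩ := (hmemT _).mp haSL.1
          obtain ⟨q, hq⟩ := (hmemT _).mp hbSL.1
          have hpq : p < q := hg.lt_iff_lt.mp (by rw [hp, hq]; exact hlt)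
          have hql : q < Fin.last m := by
            refine lt_of_le_of_ne (Fin.le_last q) (fun h => hbf' ?_)
            rw [← hq, h, hend]
          rcases lt_trichotomy (π (gl a)) (π (gl b)) with h | h | h
          · exact h
          · exact absurd (hπinj h) (fun h' => (hlt.ne h'))
          · exfalso
            refine hav213 ⟨p, q, Fin.last m, hpq, hql, ?_, ?_⟩
            · simp only [hp, hq]; exact h
            · simp only [hp, hend]; exact haπ
      have hpos : 0 < SL.card := Finset.card_pos.mpr ⟨f, hfSL⟩
      exact le_csSup bddI ⟨SL.card - 1, gl, hglm, hgll, hπm,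
        (Nat.succ_pred_eq_of_pos hpos).symm⟩
    -- SH gives a decreasing subsequence
    have hSHle : SH.card ≤ sSup D := by
      obtain ⟨gl, hglm, hgll, hglmem⟩ := enum_lemma' SH f hfSH
        (fun x hx => hmaxT x (by rw [← hunion]; exact Finset.mem_union_right _ hx))
      have hπm : StrictAnti (fun a => π (gl a)) := by
        intro a b hab
        show π (gl b) < π (gl a)
        have hlt : gl a < gl b := hglm hab
        have hbf : gl b ≤ f := by rw [← hgll]; exact hglm.monotone (Fin.le_last b)
        have haf : gl a ≠ f := (lt_of_lt_of_le hlt hbf).ne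
        have haSH := hglmem a
        have hbSH := hglmem b
        rw [hSHdef, Finset.mem_filter] at haSH hbSH
        have haπ : π f < π (gl a) :=
          lt_of_le_of_ne haSH.2 (fun h => haf (hπinj h.symm))
        rcases eq_or_ne (gl b) f with hbf' | hbf'
        · rw [hbf']; exact haπ
        · have hbπ : π f < π (gl b) :=
            lt_of_le_of_ne hbSH.2 (fun h => hbf' (hπinj h.symm))
          obtain ⟨p, hp⟩ := (hmemT _).mp haSH.1
          obtain ⟨q, hq⟩ := (hmemT _).mp hbSH.1
          have hpq : p < q := hg.lt_iff_lt.mp (by rw [hp, hq]; exact hlt)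
          have hql : q < Fin.last m := by
            refine lt_of_le_of_ne (Fin.le_last q) (fun h => hbf' ?_)
            rw [← hq, h, hend]
          rcases lt_trichotomy (π (gl b)) (π (gl a)) with h | h | h
          · exact h
          · exact absurd (hπinj h) (fun h' => (hlt.ne h'.symm))
          · exfalso
            refine hav231 ⟨p, q, Fin.last m, hpq, hql, ?_, ?_⟩
            · simp only [hp, hend]; exact haπ
            · simp only [hp, hq]; exact h
      have hpos : 0 < SH.card := Finset.card_pos.mpr ⟨f, hfSH⟩
      exact le_csSup bddD ⟨SH.card - 1, gl, hglm, hgll, hπm,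
        (Nat.succ_pred_eq_of_pos hpos).symm⟩
    omega
  -- Lower bound
  have hge : sSup I + sSup D - 1 ≤ sSup A := by
    obtain ⟨m1, g1, hg1, hend1, hπ1, hI1⟩ := Nat.sSup_mem ⟨1, h1I⟩ bddI
    obtain ⟨m2, g2, hg2, hend2, hπ2, hD2⟩ := Nat.sSup_mem ⟨1, h1D⟩ bddD
    set T1 := Finset.image g1 Finset.univ with hT1def
    set T2 := Finset.image g2 Finset.univ with hT2def
    have hmemT1 : ∀ x, x ∈ T1 ↔ ∃ p, g1 p = x := by intro x; simp [hT1def]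
    have hmemT2 : ∀ x, x ∈ T2 ↔ ∃ p, g2 p = x := by intro x; simp [hT2def]
    -- values
    have hval1 : ∀ p : Fin (m1+1), p ≠ Fin.last m1 → π (g1 p) < π f := by
      intro p hp
      have h' : π (g1 p) < π (g1 (Fin.last m1)) := hπ1 (lt_of_le_of_ne (Fin.le_last p) hp)
      rwa [hend1] at h'
    have hval2 : ∀ q : Fin (m2+1), q ≠ Fin.last m2 → π f < π (g2 q) := by
      intro q hq
      have h' : π (g2 (Fin.last m2)) < π (g2 q) := hπ2 (lt_of_le_of_ne (Fin.le_last q) hq)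
      rwa [hend2] at h'
    have hval1' : ∀ p : Fin (m1+1), π (g1 p) ≤ π f := by
      intro p
      have h' : π (g1 p) ≤ π (g1 (Fin.last m1)) := hπ1.monotone (Fin.le_last p)
      rwa [hend1] at h'
    have hval2' : ∀ q : Fin (m2+1), π f ≤ π (g2 q) := by
      intro q
      have h' : π (g2 (Fin.last m2)) ≤ π (g2 q) := hπ2.antitone (Fin.le_last q)
      rwa [hend2] at h'
    set S := T1 ∪ T2 with hSdef
    have hfS : f ∈ S := Finset.mem_union_left _ ((hmemT1 f).mpr ⟨Fin.last m1, hend1⟩)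
    have hmaxS : ∀ x ∈ S, x ≤ f := by
      intro x hx
      rcases Finset.mem_union.mp hx with h | h
      · obtain ⟨p, rfl⟩ := (hmemT1 x).mp h
        rw [← hend1]; exact hg1.monotone (Fin.le_last p)
      · obtain ⟨q, rfl⟩ := (hmemT2 x).mp h
        rw [← hend2]; exact hg2.monotone (Fin.le_last q)
    have hinter : T1 ∩ T2 = {f} := by
      ext x
      simp only [Finset.mem_inter, Finset.mem_singleton]
      constructor
      · rintro ⟨h1, h2⟩
        obtain ⟨p, rfl⟩ := (hmemT1 x).mp h1
        obtain ⟨q, hq⟩ := (hmemT2 _).mp h2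
        by_contra hne
        have hp : p ≠ Fin.last m1 := fun h => hne (by rw [h, hend1])
        have hq' : q ≠ Fin.last m2 := fun h => hne (by rw [← hq, h, hend2])
        have := hval1 p hp
        have h2' := hval2 q hq'
        rw [hq] at h2'
        exact absurd (this.trans h2') (lt_irrefl _)
      · intro hx
        rw [hx]
        exact ⟨(hmemT1 f).mpr ⟨Fin.last m1, hend1⟩, (hmemT2 f).mpr ⟨Fin.last m2, hend2⟩⟩
    have hScard : S.card = m1 + m2 + 1 := by
      have h := Finset.card_union_add_card_inter T1 T2
      rw [← hSdef, hinter] at h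
      have hc1 : T1.card = m1 + 1 := by
        rw [hT1def, Finset.card_image_of_injective _ hg1.injective]; simp
      have hc2 : T2.card = m2 + 1 := by
        rw [hT2def, Finset.card_image_of_injective _ hg2.injective]; simp
      rw [hc1, hc2] at h
      simp at h
      omega
    obtain ⟨g, hgm, hgl, hgmem⟩ := enum_lemma' S f hfS hmaxS
    have hav : AvSeq213231 (fun a => π (g a)) := by
      have hclass : ∀ a, (∃ p, g1 p = g a) ∨ (∃ q, g2 q = g a) := by
        intro a
        rcases Finset.mem_union.mp (hgmem a) with h | h
        · exact Or.inl ((hmemT1 _).mp h)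
        · exact Or.inr ((hmemT2 _).mp h)
      constructor
      · rintro ⟨i, j, k, hij, hjk, h1, h2⟩
        simp only at h1 h2
        have hgij : g i < g j := hgm hij
        have hgjk : g j < g k := hgm hjk
        have hkf : g k ≤ f := hmaxS _ (hgmem k)
        have hif : g i ≠ f := ((hgij.trans hgjk).trans_le hkf).ne
        have hjf : g j ≠ f := (hgjk.trans_le hkf).ne
        rcases hclass i with ⟨p, hp⟩ | ⟨p, hp⟩
        · -- g i in increasing chain, π (g i) < π f
          have hplast : p ≠ Fin.last m1 := fun h => hif (by rw [← hp, h, hend1])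
          have hiπ : π (g i) < π f := by rw [← hp]; exact hval1 p hplast
          -- then g j also in increasing chain
          have hjπ : π (g j) < π f := h1.trans hiπ
          have hj1 : ∃ q, g1 q = g j := by
            rcases hclass j with h | ⟨q, hq⟩
            · exact h
            · exfalso
              have hqlast : q ≠ Fin.last m2 := fun h => hjf (by rw [← hq, h, hend2])
              have := hval2 q hqlast
              rw [hq] at this
              exact absurd (this.trans hjπ) (lt_irrefl _)
          obtain ⟨q, hq⟩ := hj1
          have : q < p := by
            apply hπ1.lt_iff_lt.mp
            show π (g1 q) < π (g1 p)
            rw [hp, hq]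
            exact h1
          have : g1 q < g1 p := hg1 this
          rw [hp, hq] at this
          exact absurd (hgij.trans this) (lt_irrefl _)
        · -- g i in decreasing chain, π f < π (g i)
          have hplast : p ≠ Fin.last m2 := fun h => hif (by rw [← hp, h, hend2])
          have hiπ : π f < π (g i) := by rw [← hp]; exact hval2 p hplast
          have hkπ : π f < π (g k) := hiπ.trans h2
          have hk2 : ∃ r, g2 r = g k := by
            rcases hclass k with ⟨r, hr⟩ | h
            · exfalso
              have := hval1' r
              rw [hr] at this
              exact absurd (hkπ.trans_le this) (lt_irrefl _)
            · exact h
          obtain ⟨r, hr⟩ := hk2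
          have : r < p := by
            apply hπ2.lt_iff_gt.mp
            show π (g2 p) < π (g2 r)
            rw [hp, hr]
            exact h2
          have : g2 r < g2 p := hg2 this
          rw [hp, hr] at this
          exact absurd ((hgij.trans hgjk).trans this) (lt_irrefl _)
      · rintro ⟨i, j, k, hij, hjk, h1, h2⟩
        simp only at h1 h2
        have hgij : g i < g j := hgm hij
        have hgjk : g j < g k := hgm hjk
        have hkf : g k ≤ f := hmaxS _ (hgmem k)
        have hif : g i ≠ f := ((hgij.trans hgjk).trans_le hkf).ne
        rcases hclass i with ⟨p, hp⟩ | ⟨p, hp⟩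
        · have hplast : p ≠ Fin.last m1 := fun h => hif (by rw [← hp, h, hend1])
          have hiπ : π (g i) < π f := by rw [← hp]; exact hval1 p hplast
          have hkπ : π (g k) < π f := h1.trans hiπ
          have hkf' : g k ≠ f := fun h => by rw [h] at hkπ; exact absurd hkπ (lt_irrefl _)
          have hk1 : ∃ r, g1 r = g k := by
            rcases hclass k with h | ⟨r, hr⟩
            · exact h
            · exfalso
              have hrlast : r ≠ Fin.last m2 := fun h => hkf' (by rw [← hr, h, hend2])
              have := hval2 r hrlast
              rw [hr] at this
              exact absurd (this.trans hkπ) (lt_irrefl _)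
          obtain ⟨r, hr⟩ := hk1
          have : r < p := by
            apply hπ1.lt_iff_lt.mp
            show π (g1 r) < π (g1 p)
            rw [hp, hr]
            exact h1
          have : g1 r < g1 p := hg1 this
          rw [hp, hr] at this
          exact absurd ((hgij.trans hgjk).trans this) (lt_irrefl _)
        · have hplast : p ≠ Fin.last m2 := fun h => hif (by rw [← hp, h, hend2])
          have hiπ : π f < π (g i) := by rw [← hp]; exact hval2 p hplast
          have hjπ : π f < π (g j) := hiπ.trans h2
          have hjf : g j ≠ f := fun h => by rw [h] at hjπ; exact absurd hjπ (lt_irrefl _)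
          have hj2 : ∃ q, g2 q = g j := by
            rcases hclass j with ⟨q, hq⟩ | h
            · exfalso
              have := hval1' q
              rw [hq] at this
              exact absurd (hjπ.trans_le this) (lt_irrefl _)
            · exact h
          obtain ⟨q, hq⟩ := hj2
          have : q < p := by
            apply hπ2.lt_iff_gt.mp
            show π (g2 p) < π (g2 q)
            rw [hp, hq]
            exact h2
          have : g2 q < g2 p := hg2 this
          rw [hp, hq] at this
          exact absurd (hgij.trans this) (lt_irrefl _)
    have hmemA : S.card ∈ A := by
      have hpos : 0 < S.card := Finset.card_pos.mpr ⟨f, hfS⟩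
      exact ⟨S.card - 1, g, hgm, hgl, hav, (Nat.succ_pred_eq_of_pos hpos).symm⟩
    have := le_csSup bddA hmemA
    rw [hScard] at this
    omega
  exact le_antisymm hle hge
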